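/- Let H be a locally compact Hausdorff topological group with left Haar measure μ_H, let m : H → (0,∞) be a weight (continuous with m(xy) ≤ m(x)m(y)), let U ⊆ H be a compact set, and let f, g : H → [0,∞) be continuous. Then ∫_H sup_{y∈U} (f∗g)(xy) · m(x) dμ_H(x) ≤ ( ∫_H f(x) m(x) dμ_H(x) ) · ( ∫_H sup_{y∈U} g(xy) · m(x) dμ_H(x) ), where (f∗g)(x) = ∫_H f(y) g(y⁻¹x) dμ_H(y). In particular, the weighted Wiener-amalgam norm of a convolution is bounded by ‖f‖_{L¹_m}·‖g‖_{W(C⁰,L¹_m)}. -/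

import Mathlib

open MeasureTheory ENNReal Set
open scoped Pointwise

/-- Monotone sequence of continuous `[0,1]`-valued compactly supported cutoffs adapted to a
sequence of compact sets. -/
lemma aux_monotone_cutoffs {X : Type*} [TopologicalSpace X] [RegularSpace X]
    [LocallyCompactSpace X] (K : ℕ → Set X) (hK : ∀ n, IsCompact (K n)) :
    ∃ χ : ℕ → X → ℝ, (∀ n, Continuous (χ n)) ∧ (∀ n, HasCompactSupport (χ n)) ∧
      (∀ n x, χ n x ∈ Set.Icc (0:ℝ) 1) ∧ (∀ n x, x ∈ K n → χ n x = 1) ∧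
      (∀ n, χ n ≤ χ (n+1)) := by
  have u : ∀ C : Set X, IsCompact C → ∃ f : X → ℝ, Continuous f ∧ HasCompactSupport f ∧
      (∀ x, f x ∈ Set.Icc (0:ℝ) 1) ∧ Set.EqOn f 1 C := by
    intro C hC
    obtain ⟨f, hf1, _, hfc, hficc⟩ :=
      exists_continuous_one_zero_of_isCompact hC isClosed_empty (Set.disjoint_empty _)
    exact ⟨f, f.continuous, hfc, hficc, hf1⟩
  choose F hFc hFs hFicc hF1 using u
  let D : ℕ → {C : Set X // IsCompact C} :=
    fun n => Nat.rec ⟨K 0, hK 0⟩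
      (fun m p => ⟨K (m+1) ∪ tsupport (F p.1 p.2), (hK (m+1)).union (hFs p.1 p.2)⟩) n
  have hDsucc : ∀ n, (D (n+1)).1 = K (n+1) ∪ tsupport (F (D n).1 (D n).2) := fun n => rfl
  refine ⟨fun n => F (D n).1 (D n).2, fun n => hFc _ _, fun n => hFs _ _,
    fun n x => hFicc _ _ x, ?_, ?_⟩
  · intro n x hx
    have hsub : K n ⊆ (D n).1 := by
      cases n with
      | zero => exact subset_rfl
      | succ m => rw [hDsucc m]; exact Set.subset_union_left
    exact hF1 _ _ (hsub hx)
  · intro n x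
    show F (D n).1 (D n).2 x ≤ F (D (n+1)).1 (D (n+1)).2 x
    by_cases hx : x ∈ tsupport (F (D n).1 (D n).2)
    · have h1 : F (D (n+1)).1 (D (n+1)).2 x = 1 := by
        apply hF1
        rw [hDsucc n]
        exact Set.mem_union_right _ hx
      have := (hFicc (D n).1 (D n).2 x).2
      rw [h1]; exact this
    · have h0 : F (D n).1 (D n).2 x = 0 := image_eq_zero_of_notMem_tsupport hx
      rw [h0]
      exact (hFicc (D (n+1)).1 (D (n+1)).2 x).1

/-- In a locally compact group with a Haar measure, every open set of finite measure is
contained in a σ-compact set. -/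
lemma aux_open_finite_subset_sigmaCompact {H : Type*} [Group H] [TopologicalSpace H]
    [IsTopologicalGroup H] [LocallyCompactSpace H] [T2Space H] [MeasurableSpace H] [BorelSpace H]
    (μ : Measure H) [μ.IsHaarMeasure] (O : Set H) (hO : IsOpen O) (hfin : μ O ≠ ∞) :
    ∃ R : Set H, IsSigmaCompact R ∧ O ⊆ R := by
  obtain ⟨K, K_comp, K_nhds⟩ := exists_compact_mem_nhds (1 : H)
  set V : Set H := K ∪ K⁻¹ with hV
  have V_comp : IsCompact V := K_comp.union K_comp.inv
  have V_symm : V⁻¹ = V := by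
    ext x
    simp only [hV, Set.mem_inv, Set.mem_union, or_comm, Set.mem_inv, inv_inv]
  have V_pow_comp : ∀ n : ℕ, IsCompact (V ^ (n+1)) := by
    intro n
    induction n with
    | zero => simpa [pow_one] using V_comp
    | succ m ih => rw [pow_succ]; exact ih.mul V_comp
  set S : Subgroup H := Subgroup.closure V with hS
  -- the субgroup as a union of powers
  have hpow_sub : ∀ n : ℕ, V ^ (n+1) ⊆ (S : Set H) := by
    intro n
    induction n with
    | zero =>
      intro x hx
      rw [zero_add, pow_one] at hx
      exact Subgroup.subset_closure hx
    | succ m ih =>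
      rw [pow_succ]
      rintro x ⟨a, ha, b, hb, rfl⟩
      exact S.mul_mem (ih ha) (Subgroup.subset_closure hb)
  have hSeq : (S : Set H) = ⋃ n : ℕ, V ^ (n+1) := by
    apply Set.Subset.antisymm
    · intro x hx
      refine Subgroup.closure_induction ?_ ?_ ?_ ?_ hx
      · intro y hy
        exact Set.mem_iUnion.2 ⟨0, by simpa [pow_one] using hy⟩
      · refine Set.mem_iUnion.2 ⟨0, ?_⟩
        rw [zero_add, pow_one]
        exact Or.inl (mem_of_mem_nhds K_nhds)
      · rintro a b _ _ ⟨_, ⟨⟨n, rfl⟩, ha⟩⟩ ⟨_, ⟨⟨m, rfl⟩, hb⟩⟩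
        refine Set.mem_iUnion.2 ⟨n + m + 1, ?_⟩
        have : V ^ (n+1) * V ^ (m+1) = V ^ (n + m + 1 + 1) := by
          rw [← pow_add]; ring_nf
        rw [← this]
        exact Set.mul_mem_mul ha hb
      · rintro a _ ⟨_, ⟨⟨n, rfl⟩, ha⟩⟩
        refine Set.mem_iUnion.2 ⟨n, ?_⟩
        have : (V ^ (n+1))⁻¹ = V ^ (n+1) := by
          rw [← inv_pow, V_symm]
        rw [← this]
        exact Set.inv_mem_inv.2 ha
    · exact Set.iUnion_subset hpow_sub
  have hS_sigma : IsSigmaCompact (S : Set H) := by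
    rw [hSeq]
    exact isSigmaCompact_iUnion_of_isCompact _ (fun n => V_pow_comp n)
  have hS_open : IsOpen (S : Set H) :=
    Subgroup.isOpen_of_mem_nhds S
      (Filter.mem_of_superset K_nhds (fun x hx => Subgroup.subset_closure (Or.inl hx)))
  -- coset decomposition
  set As : (H ⧸ S) → Set H := fun c => O ∩ (QuotientGroup.mk ⁻¹' {c}) with hAs
  have coset_eq : ∀ a : H, (QuotientGroup.mk ⁻¹' {(QuotientGroup.mk a : H ⧸ S)} : Set H)
      = (fun x => a⁻¹ * x) ⁻¹' (S : Set H) := by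
    intro a
    ext x
    simp only [Set.mem_preimage, Set.mem_singleton_iff, SetLike.mem_coe]
    rw [eq_comm, QuotientGroup.eq]
  have coset_open : ∀ c : H ⧸ S, IsOpen (QuotientGroup.mk ⁻¹' {c} : Set H) := by
    intro c
    obtain ⟨a, rfl⟩ := Quotient.exists_rep c
    rw [coset_eq a]
    exact hS_open.preimage (continuous_const.mul continuous_id)
  have coset_sigma : ∀ c : H ⧸ S, IsSigmaCompact (QuotientGroup.mk ⁻¹' {c} : Set H) := by
    intro c
    obtain ⟨a, rfl⟩ := Quotient.exists_rep c
    rw [coset_eq a]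
    have : (fun x => a⁻¹ * x) ⁻¹' (S : Set H) = (fun x => a * x) '' (S : Set H) := by
      ext x
      simp only [Set.mem_preimage, Set.mem_image, SetLike.mem_coe]
      constructor
      · intro hx
        exact ⟨a⁻¹ * x, hx, by group⟩
      · rintro ⟨y, hy, rfl⟩
        simpa using hy
    rw [this]
    exact hS_sigma.image (continuous_const.mul continuous_id)
  have As_meas : ∀ c, MeasurableSet (As c) :=
    fun c => (hO.inter (coset_open c)).measurableSet
  have As_disj : Pairwise (Function.onFun Disjoint As) := by
    intro c d hcd
    simp only [Function.onFun, hAs]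
    refine Set.disjoint_left.2 ?_
    rintro x ⟨_, hx⟩ ⟨_, hx'⟩
    exact hcd (hx.symm.trans hx')
  have As_union : (⋃ c, As c) = O := by
    ext x
    simp [hAs]
  have Tcount : Set.Countable {c : H ⧸ S | 0 < μ (As c)} :=
    MeasureTheory.Measure.countable_meas_pos_of_disjoint_of_meas_iUnion_ne_top μ As_meas As_disj
      (by rw [As_union]; exact hfin)
  refine ⟨⋃ c ∈ {c : H ⧸ S | 0 < μ (As c)}, (QuotientGroup.mk ⁻¹' {c} : Set H),
    isSigmaCompact_biUnion Tcount (fun c _ => coset_sigma c), ?_⟩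
  intro x hx
  have hpos : 0 < μ (As (QuotientGroup.mk x)) := by
    apply (hO.inter (coset_open _)).measure_pos μ
    exact ⟨x, hx, rfl⟩
  exact Set.mem_biUnion hpos rfl

/-- Key swap inequality. -/
lemma aux_keyswap {H : Type*} [Group H] [TopologicalSpace H]
    [IsTopologicalGroup H] [LocallyCompactSpace H] [T2Space H] [MeasurableSpace H] [BorelSpace H]
    (μ : Measure H) [μ.IsHaarMeasure]
    (k Ψ : H → ℝ) (hk : Continuous k) (hΨ : Continuous Ψ)
    (hk0 : ∀ z, 0 ≤ k z) (hΨ0 : ∀ x, 0 ≤ Ψ x)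
    (hA : (∫⁻ z, ENNReal.ofReal (k z) ∂μ) ≠ ∞)
    (hB : (∫⁻ x, ENNReal.ofReal (Ψ x) ∂μ) ≠ ∞) :
    (∫⁻ x, ∫⁻ z, ENNReal.ofReal (k z) * ENNReal.ofReal (Ψ (z⁻¹ * x)) ∂μ ∂μ)
      ≤ (∫⁻ z, ENNReal.ofReal (k z) ∂μ) * ∫⁻ x, ENNReal.ofReal (Ψ x) ∂μ := by
  -- σ-compact covers of the supports
  have cover : ∀ h : H → ℝ, Continuous h → (∀ x, 0 ≤ h x) →
      (∫⁻ x, ENNReal.ofReal (h x) ∂μ) ≠ ∞ →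
      ∃ R : Set H, IsSigmaCompact R ∧ {x | h x ≠ 0} ⊆ R := by
    intro h hc hnn hfin
    have hOn : ∀ n : ℕ, IsOpen {x | (1:ℝ)/(n+1) < h x} :=
      fun n => isOpen_lt continuous_const hc
    have hOnfin : ∀ n : ℕ, μ {x | (1:ℝ)/(n+1) < h x} ≠ ∞ := by
      intro n
      intro htop
      have hpos : (0:ℝ) < 1/(n+1) := by positivity
      have h1 : ENNReal.ofReal ((1:ℝ)/(n+1)) * μ {x | (1:ℝ)/(n+1) < h x}
          ≤ ∫⁻ x, ENNReal.ofReal (h x) ∂μ := by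
        rw [← setLIntegral_const {x | (1:ℝ)/(n+1) < h x} (ENNReal.ofReal ((1:ℝ)/(n+1)))]
        refine le_trans (setLIntegral_mono (by fun_prop) ?_) (setLIntegral_le_lintegral _ _)
        exact fun x hx => ENNReal.ofReal_le_ofReal (le_of_lt hx)
      rw [htop, ENNReal.mul_top (by simp [ENNReal.ofReal_eq_zero, not_le]; positivity)] at h1
      exact hfin (top_le_iff.mp h1)
    have hcov : ∀ n : ℕ, ∃ R : Set H, IsSigmaCompact R ∧ {x | (1:ℝ)/(n+1) < h x} ⊆ R :=
      fun n => aux_open_finite_subset_sigmaCompact μ _ (hOn n) (hOnfin n)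
    choose Rs hRsig hRsub using hcov
    refine ⟨⋃ n, Rs n, isSigmaCompact_iUnion _ hRsig, ?_⟩
    intro x hx
    have hxpos : 0 < h x := lt_of_le_of_ne (hnn x) (Ne.symm hx)
    obtain ⟨n, hn⟩ := exists_nat_one_div_lt hxpos
    exact Set.mem_iUnion.2 ⟨n, hRsub n hn⟩
  obtain ⟨R₁, hR₁sig, hR₁⟩ := cover k hk hk0 hA
  obtain ⟨R₂, hR₂sig, hR₂⟩ := cover Ψ hΨ hΨ0 hB
  obtain ⟨C, hCcomp, hCU⟩ := hR₁sig
  obtain ⟨D, hDcomp, hDU⟩ := hR₂sig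
  -- compact exhaustions
  set KZ : ℕ → Set H := fun n => Set.accumulate C n with hKZ
  have hKZcomp : ∀ n, IsCompact (KZ n) := fun n => isCompact_accumulate hCcomp n
  set E : ℕ → Set H := fun n => C (Nat.unpair n).1 * D (Nat.unpair n).2 with hE
  have hEcomp : ∀ n, IsCompact (E n) := fun n => (hCcomp _).mul (hDcomp _)
  set KX : ℕ → Set H := fun n => Set.accumulate E n with hKX
  have hKXcomp : ∀ n, IsCompact (KX n) := fun n => isCompact_accumulate hEcomp n
  have hKZmono : Monotone KZ := Set.monotone_accumulate
  have hKXmono : Monotone KX := Set.monotone_accumulate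
  have hZcov : {z | k z ≠ 0} ⊆ ⋃ n, KZ n := by
    rw [hKZ]; rw [Set.iUnion_accumulate, hCU]; exact hR₁
  have hXcov : R₁ * R₂ ⊆ ⋃ n, KX n := by
    rw [hKX, Set.iUnion_accumulate]
    rintro x ⟨a, ha, b, hb, rfl⟩
    rw [← hCU] at ha
    rw [← hDU] at hb
    obtain ⟨i, hi⟩ := Set.mem_iUnion.1 ha
    obtain ⟨j, hj⟩ := Set.mem_iUnion.1 hb
    refine Set.mem_iUnion.2 ⟨Nat.pair i j, ?_⟩
    rw [hE]
    simp only [Nat.unpair_pair]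
    exact Set.mul_mem_mul hi hj
  -- cutoffs
  obtain ⟨η, hηc, hηs, hηicc, hη1, hηmono⟩ := aux_monotone_cutoffs KZ hKZcomp
  obtain ⟨χ, hχc, hχs, hχicc, hχ1, hχmono⟩ := aux_monotone_cutoffs KX hKXcomp
  have hηM : Monotone η := monotone_nat_of_le_succ hηmono
  have hχM : Monotone χ := monotone_nat_of_le_succ hχmono
  -- inner real integrals
  set I : ℕ → H → ℝ := fun n x => ∫ z, (η n z * k z) * Ψ (z⁻¹ * x) ∂μ with hI
  have hIcont : ∀ n, Continuous (I n) := by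
    intro n
    have hco : ContinuousOn (fun x => ∫ z, (η n z * k z) * Ψ (z⁻¹ * x) ∂μ) Set.univ := by
      apply continuousOn_integral_of_compact_support (hηs n)
      · apply Continuous.continuousOn
        exact (((hηc n).comp continuous_snd).mul (hk.comp continuous_snd)).mul
          (hΨ.comp ((continuous_snd.inv).mul continuous_fst))
      · intro p z _ hz
        simp [image_eq_zero_of_notMem_tsupport hz]
    exact continuousOn_univ.mp hco
  have hInn : ∀ n x, 0 ≤ I n x := fun n x =>
    integral_nonneg (fun z => mul_nonneg (mul_nonneg (hηicc n z).1 (hk0 z)) (hΨ0 _))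
  have hint_z : ∀ n x, Integrable (fun z => (η n z * k z) * Ψ (z⁻¹ * x)) μ := by
    intro n x
    apply Continuous.integrable_of_hasCompactSupport
    · exact (((hηc n).mul hk)).mul (hΨ.comp ((continuous_inv).mul continuous_const))
    · apply HasCompactSupport.intro (hηs n)
      intro z hz
      simp [image_eq_zero_of_notMem_tsupport hz]
  have hΘI : ∀ n x, (∫⁻ z, ENNReal.ofReal (η n z * k z) * ENNReal.ofReal (Ψ (z⁻¹ * x)) ∂μ)
      = ENNReal.ofReal (I n x) := by
    intro n x
    calc (∫⁻ z, ENNReal.ofReal (η n z * k z) * ENNReal.ofReal (Ψ (z⁻¹ * x)) ∂μ)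
        = ∫⁻ z, ENNReal.ofReal ((η n z * k z) * Ψ (z⁻¹ * x)) ∂μ :=
          lintegral_congr fun z =>
            (ENNReal.ofReal_mul (mul_nonneg (hηicc n z).1 (hk0 z))).symm
      _ = ENNReal.ofReal (I n x) :=
          (ofReal_integral_eq_lintegral_ofReal (hint_z n x)
            (Filter.Eventually.of_forall fun z =>
              mul_nonneg (mul_nonneg (hηicc n z).1 (hk0 z)) (hΨ0 _))).symm
  -- inner monotone convergence
  have hΘ : ∀ x, (∫⁻ z, ENNReal.ofReal (k z) * ENNReal.ofReal (Ψ (z⁻¹ * x)) ∂μ)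
      = ⨆ n, ENNReal.ofReal (I n x) := by
    intro x
    have hmeasn : ∀ n, Measurable
        (fun z => ENNReal.ofReal (η n z * k z) * ENNReal.ofReal (Ψ (z⁻¹ * x))) := by
      intro n
      exact ((ENNReal.continuous_ofReal.comp ((hηc n).mul hk)).measurable).mul
        ((ENNReal.continuous_ofReal.comp (hΨ.comp (continuous_inv.mul continuous_const))).measurable)
    have hmono : Monotone
        (fun n => fun z => ENNReal.ofReal (η n z * k z) * ENNReal.ofReal (Ψ (z⁻¹ * x))) := by
      intro a b hab z
      exact mul_le_mul_left (ENNReal.ofReal_le_ofReal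
        (mul_le_mul_of_nonneg_right (hηM hab z) (hk0 z))) _
    have hsup : ∀ z, (⨆ n, ENNReal.ofReal (η n z * k z) * ENNReal.ofReal (Ψ (z⁻¹ * x)))
        = ENNReal.ofReal (k z) * ENNReal.ofReal (Ψ (z⁻¹ * x)) := by
      intro z
      rw [← ENNReal.iSup_mul]
      congr 1
      rcases eq_or_ne (k z) 0 with h | h
      · simp [h]
      · obtain ⟨m, hm⟩ := Set.mem_iUnion.1 (hZcov (by exact h : k z ≠ 0))
        apply le_antisymm
        · exact iSup_le fun n => ENNReal.ofReal_le_ofReal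
            (mul_le_of_le_one_left (hk0 z) (hηicc n z).2)
        · have : ENNReal.ofReal (k z) = ENNReal.ofReal (η m z * k z) := by
            rw [hη1 m z hm, one_mul]
          rw [this]
          exact le_iSup (fun n => ENNReal.ofReal (η n z * k z)) m
    calc (∫⁻ z, ENNReal.ofReal (k z) * ENNReal.ofReal (Ψ (z⁻¹ * x)) ∂μ)
        = ∫⁻ z, ⨆ n, ENNReal.ofReal (η n z * k z) * ENNReal.ofReal (Ψ (z⁻¹ * x)) ∂μ :=
          lintegral_congr fun z => (hsup z).symm
      _ = ⨆ n, ∫⁻ z, ENNReal.ofReal (η n z * k z) * ENNReal.ofReal (Ψ (z⁻¹ * x)) ∂μ :=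
          lintegral_iSup hmeasn hmono
      _ = ⨆ n, ENNReal.ofReal (I n x) := by
          exact iSup_congr fun n => hΘI n x
  -- monotonicity of I
  have hIM : ∀ a b : ℕ, a ≤ b → ∀ x, I a x ≤ I b x := by
    intro a b hab x
    refine integral_mono (hint_z a x) (hint_z b x) fun z => ?_
    exact mul_le_mul_of_nonneg_right
      (mul_le_mul_of_nonneg_right (hηM hab z) (hk0 z)) (hΨ0 _)
  -- the outer approximants
  set Λ : ℕ → H → ℝ≥0∞ := fun n x => ENNReal.ofReal (χ n x) * ENNReal.ofReal (I n x) with hΛ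
  have hΛmeas : ∀ n, Measurable (Λ n) := by
    intro n
    exact ((ENNReal.continuous_ofReal.comp (hχc n)).measurable).mul
      ((ENNReal.continuous_ofReal.comp (hIcont n)).measurable)
  have hΛmono : Monotone Λ := by
    intro a b hab x
    exact mul_le_mul' (ENNReal.ofReal_le_ofReal (hχM hab x))
      (ENNReal.ofReal_le_ofReal (hIM a b hab x))
  -- identification of the pointwise supremum
  have key : ∀ x, (∫⁻ z, ENNReal.ofReal (k z) * ENNReal.ofReal (Ψ (z⁻¹ * x)) ∂μ)
      = ⨆ n, Λ n x := by
    intro x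
    by_cases hx : ∀ z, ENNReal.ofReal (k z) * ENNReal.ofReal (Ψ (z⁻¹ * x)) = 0
    · have hI0 : ∀ n, I n x = 0 := by
        intro n
        have hz0 : ∀ z, (η n z * k z) * Ψ (z⁻¹ * x) = 0 := by
          intro z
          rcases eq_or_ne (k z) 0 with h | h
          · simp [h]
          · have hkpos : 0 < k z := lt_of_le_of_ne (hk0 z) (Ne.symm h)
            have h0 : ENNReal.ofReal (Ψ (z⁻¹ * x)) = 0 := by
              rcases mul_eq_zero.mp (hx z) with h' | h'
              · exact absurd h' (by simp [ENNReal.ofReal_eq_zero, not_le, hkpos])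
              · exact h'
            have : Ψ (z⁻¹ * x) = 0 :=
              le_antisymm (by simpa [ENNReal.ofReal_eq_zero] using h0) (hΨ0 _)
            simp [this]
        simp only [hI]
        simp only [hz0]
        simp
      have h1 : (∫⁻ z, ENNReal.ofReal (k z) * ENNReal.ofReal (Ψ (z⁻¹ * x)) ∂μ) = 0 := by
        rw [lintegral_congr hx, lintegral_zero]
      rw [h1]
      symm
      simp [hΛ, hI0]
    · push_neg at hx
      obtain ⟨z₀, hz₀⟩ := hx
      have hk₀ : k z₀ ≠ 0 := by
        intro h
        exact hz₀ (by simp [h])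
      have hΨ₀ : Ψ (z₀⁻¹ * x) ≠ 0 := by
        intro h
        exact hz₀ (by simp [h])
      have hxR : x ∈ ⋃ n, KX n := by
        apply hXcov
        exact ⟨z₀, hR₁ hk₀, z₀⁻¹ * x, hR₂ hΨ₀, by group⟩
      obtain ⟨m, hm⟩ := Set.mem_iUnion.1 hxR
      have hχ1' : ∀ n, m ≤ n → χ n x = 1 := by
        intro n hn
        have h1 : χ m x = 1 := hχ1 m x hm
        have h2 : χ m x ≤ χ n x := hχM hn x
        have h3 : χ n x ≤ 1 := (hχicc n x).2
        linarith
      rw [hΘ x]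
      apply le_antisymm
      · refine iSup_le fun n => ?_
        have h1 : ENNReal.ofReal (I n x) ≤ Λ (max n m) x := by
          simp only [hΛ]
          have : χ (max n m) x = 1 := hχ1' _ (le_max_right n m)
          rw [this]
          simp only [ENNReal.ofReal_one, one_mul]
          exact ENNReal.ofReal_le_ofReal (hIM n (max n m) (le_max_left n m) x)
        exact h1.trans (le_iSup (fun j => Λ j x) (max n m))
      · refine iSup_le fun n => ?_
        have h1 : Λ n x ≤ ENNReal.ofReal (I n x) := by
          simp only [hΛ]
          refine mul_le_of_le_one_left (zero_le) ?_
          exact ENNReal.ofReal_le_one.2 (hχicc n x).2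
        exact h1.trans (le_iSup (fun j => ENNReal.ofReal (I j x)) n)
  -- per-n estimate
  have per_n : ∀ n, (∫⁻ x, Λ n x ∂μ)
      ≤ (∫⁻ z, ENNReal.ofReal (k z) ∂μ) * ∫⁻ x, ENNReal.ofReal (Ψ x) ∂μ := by
    intro n
    have hintχI : Integrable (fun x => χ n x * I n x) μ := by
      apply Continuous.integrable_of_hasCompactSupport ((hχc n).mul (hIcont n))
      apply HasCompactSupport.intro (hχs n)
      intro x hxs
      simp [image_eq_zero_of_notMem_tsupport hxs]
    have h1 : (∫⁻ x, Λ n x ∂μ) = ENNReal.ofReal (∫ x, χ n x * I n x ∂μ) := by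
      calc (∫⁻ x, Λ n x ∂μ)
          = ∫⁻ x, ENNReal.ofReal (χ n x * I n x) ∂μ :=
            lintegral_congr fun x => by
              simp only [hΛ]
              rw [← ENNReal.ofReal_mul (hχicc n x).1]
        _ = ENNReal.ofReal (∫ x, χ n x * I n x ∂μ) :=
            (ofReal_integral_eq_lintegral_ofReal hintχI
              (Filter.Eventually.of_forall fun x =>
                mul_nonneg (hχicc n x).1 (hInn n x))).symm
    -- Fubini for compactly supported continuous functions
    have hswap : (∫ x, χ n x * I n x ∂μ)
        = ∫ z, ∫ x, χ n x * ((η n z * k z) * Ψ (z⁻¹ * x)) ∂μ ∂μ := by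
      have e1 : (∫ x, χ n x * I n x ∂μ)
          = ∫ x, ∫ z, χ n x * ((η n z * k z) * Ψ (z⁻¹ * x)) ∂μ ∂μ := by
        refine integral_congr_ae (Filter.Eventually.of_forall fun x => ?_)
        simp only [hI]
        exact (integral_const_mul (χ n x) _).symm
      rw [e1]
      apply integral_integral_swap_of_hasCompactSupport
      · apply Continuous.mul ((hχc n).comp continuous_fst)
        exact (((hηc n).comp continuous_snd).mul (hk.comp continuous_snd)).mul
          (hΨ.comp ((continuous_snd.inv).mul continuous_fst))
      · apply HasCompactSupport.intro ((hχs n).prod (hηs n))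
        rintro ⟨x, z⟩ hp
        simp only [Set.mem_prod, not_and_or] at hp
        rcases hp with h | h
        · simp [Function.uncurry, image_eq_zero_of_notMem_tsupport h]
        · simp [Function.uncurry, image_eq_zero_of_notMem_tsupport h]
    -- the J-function and its continuity
    set J : H → ℝ := fun z => ∫ x, χ n x * Ψ (z⁻¹ * x) ∂μ with hJ
    have hJcont : Continuous J := by
      have hco : ContinuousOn (fun z => ∫ x, χ n x * Ψ (z⁻¹ * x) ∂μ) Set.univ := by
        apply continuousOn_integral_of_compact_support (hχs n)
        · apply Continuous.continuousOn
          exact ((hχc n).comp continuous_snd).mul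
            (hΨ.comp ((continuous_fst.inv).mul continuous_snd))
        · intro p x _ hxs
          simp [image_eq_zero_of_notMem_tsupport hxs]
      exact continuousOn_univ.mp hco
    have hJnn : ∀ z, 0 ≤ J z := fun z =>
      integral_nonneg fun x => mul_nonneg (hχicc n x).1 (hΨ0 _)
    have hJle : ∀ z, J z ≤ (∫⁻ x, ENNReal.ofReal (Ψ x) ∂μ).toReal := by
      intro z
      simp only [hJ]
      rw [integral_eq_lintegral_of_nonneg_ae
        (Filter.Eventually.of_forall fun x => mul_nonneg (hχicc n x).1 (hΨ0 _))
        (((hχc n).mul (hΨ.comp (continuous_mul_left z⁻¹))).aestronglyMeasurable)]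
      apply ENNReal.toReal_mono hB
      calc (∫⁻ x, ENNReal.ofReal (χ n x * Ψ (z⁻¹ * x)) ∂μ)
          ≤ ∫⁻ x, ENNReal.ofReal (Ψ (z⁻¹ * x)) ∂μ :=
            lintegral_mono fun x => ENNReal.ofReal_le_ofReal
              (mul_le_of_le_one_left (hΨ0 _) (hχicc n x).2)
        _ = ∫⁻ x, ENNReal.ofReal (Ψ x) ∂μ :=
            lintegral_mul_left_eq_self (fun x => ENNReal.ofReal (Ψ x)) z⁻¹
    have e2 : (∫ z, ∫ x, χ n x * ((η n z * k z) * Ψ (z⁻¹ * x)) ∂μ ∂μ)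
        = ∫ z, (η n z * k z) * J z ∂μ := by
      refine integral_congr_ae (Filter.Eventually.of_forall fun z => ?_)
      simp only [hJ]
      rw [← integral_const_mul]
      refine integral_congr_ae (Filter.Eventually.of_forall fun x => ?_)
      ring
    have hηk_int : Integrable (fun z => η n z * k z) μ := by
      apply Continuous.integrable_of_hasCompactSupport ((hηc n).mul hk)
      apply HasCompactSupport.intro (hηs n)
      intro z hz
      simp [image_eq_zero_of_notMem_tsupport hz]
    have hηkJ_int : Integrable (fun z => (η n z * k z) * J z) μ := by
      apply Continuous.integrable_of_hasCompactSupport (((hηc n).mul hk).mul hJcont)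
      apply HasCompactSupport.intro (hηs n)
      intro z hz
      simp [image_eq_zero_of_notMem_tsupport hz]
    have e3 : (∫ z, (η n z * k z) * J z ∂μ)
        ≤ ∫ z, (η n z * k z) * (∫⁻ x, ENNReal.ofReal (Ψ x) ∂μ).toReal ∂μ := by
      refine integral_mono hηkJ_int (hηk_int.mul_const _) fun z => ?_
      exact mul_le_mul_of_nonneg_left (hJle z) (mul_nonneg (hηicc n z).1 (hk0 z))
    have e4 : (∫ z, (η n z * k z) * (∫⁻ x, ENNReal.ofReal (Ψ x) ∂μ).toReal ∂μ)
        = (∫ z, η n z * k z ∂μ) * (∫⁻ x, ENNReal.ofReal (Ψ x) ∂μ).toReal :=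
      integral_mul_const _ _
    have e5 : (∫ z, η n z * k z ∂μ) ≤ (∫⁻ z, ENNReal.ofReal (k z) ∂μ).toReal := by
      rw [integral_eq_lintegral_of_nonneg_ae
        (Filter.Eventually.of_forall fun z => mul_nonneg (hηicc n z).1 (hk0 z))
        (((hηc n).mul hk).aestronglyMeasurable)]
      apply ENNReal.toReal_mono hA
      exact lintegral_mono fun z => ENNReal.ofReal_le_ofReal
        (mul_le_of_le_one_left (hk0 z) (hηicc n z).2)
    rw [h1]
    calc ENNReal.ofReal (∫ x, χ n x * I n x ∂μ)
        ≤ ENNReal.ofReal ((∫⁻ z, ENNReal.ofReal (k z) ∂μ).toReal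
            * (∫⁻ x, ENNReal.ofReal (Ψ x) ∂μ).toReal) := by
          apply ENNReal.ofReal_le_ofReal
          rw [hswap, e2]
          refine e3.trans ?_
          rw [e4]
          exact mul_le_mul_of_nonneg_right e5 ENNReal.toReal_nonneg
      _ = (∫⁻ z, ENNReal.ofReal (k z) ∂μ) * ∫⁻ x, ENNReal.ofReal (Ψ x) ∂μ := by
          rw [ENNReal.ofReal_mul ENNReal.toReal_nonneg, ENNReal.ofReal_toReal hA,
            ENNReal.ofReal_toReal hB]
  -- conclusion
  calc (∫⁻ x, ∫⁻ z, ENNReal.ofReal (k z) * ENNReal.ofReal (Ψ (z⁻¹ * x)) ∂μ ∂μ)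
      = ∫⁻ x, ⨆ n, Λ n x ∂μ := lintegral_congr key
    _ = ⨆ n, ∫⁻ x, Λ n x ∂μ := lintegral_iSup hΛmeas hΛmono
    _ ≤ _ := iSup_le per_n



/-- Weighted Young-type inequality for Wiener amalgam norms: on a locally compact
group `H` with left Haar measure `μ`, weight `m`, compact `U` and continuous nonnegative `f, g`,
the amalgam norm of the convolution `f∗g` is bounded by `‖f‖_{L¹_m} · ‖g‖_{W(C⁰,L¹_m)}`. -/
theorem stmt4 {H : Type*} [Group H] [TopologicalSpace H] [IsTopologicalGroup H]
    [LocallyCompactSpace H] [T2Space H] [MeasurableSpace H] [BorelSpace H]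
    (μ : Measure H) [μ.IsHaarMeasure]
    (m : H → ℝ) (hmcont : Continuous m) (hmpos : ∀ x, 0 < m x)
    (hmsub : ∀ x y, m (x * y) ≤ m x * m y)
    (U : Set H) (hU : IsCompact U)
    (f g : H → NNReal) (hf : Continuous f) (hg : Continuous g) :
    (∫⁻ x, (⨆ y ∈ U, ∫⁻ z, (f z : ℝ≥0∞) * (g (z⁻¹ * (x * y)) : ℝ≥0∞) ∂μ) *
        ENNReal.ofReal (m x) ∂μ) ≤
      (∫⁻ x, (f x : ℝ≥0∞) * ENNReal.ofReal (m x) ∂μ) *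
        ∫⁻ x, (⨆ y ∈ U, (g (x * y) : ℝ≥0∞)) * ENNReal.ofReal (m x) ∂μ := by
  -- real-valued versions of the relevant functions
  set k₀ : H → ℝ := fun z => (f z : ℝ) * m z with hk₀
  have hk₀c : Continuous k₀ := (NNReal.continuous_coe.comp hf).mul hmcont
  have hk₀nn : ∀ z, 0 ≤ k₀ z := fun z => mul_nonneg (f z).coe_nonneg (hmpos z).le
  set G₀ : H → ℝ := fun x => sSup ((fun y => (g (x * y) : ℝ)) '' U) with hG₀
  have hG₀c : Continuous G₀ := by
    apply hU.continuous_sSup (f := fun x y => (g (x * y) : ℝ))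
    exact NNReal.continuous_coe.comp (hg.comp continuous_mul)
  have hG₀nn : ∀ x, 0 ≤ G₀ x := by
    intro x
    apply Real.sSup_nonneg
    rintro r ⟨y, _, rfl⟩
    exact (g (x * y)).coe_nonneg
  have hGeq : ∀ x, (⨆ y ∈ U, (g (x * y) : ℝ≥0∞)) = ENNReal.ofReal (G₀ x) := by
    intro x
    apply le_antisymm
    · refine iSup₂_le fun y hy => ?_
      rw [← ENNReal.ofReal_coe_nnreal]
      apply ENNReal.ofReal_le_ofReal
      apply le_csSup
      · exact (hU.image (NNReal.continuous_coe.comp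
          (hg.comp (continuous_mul_left x)))).bddAbove
      · exact Set.mem_image_of_mem _ hy
    · rcases Set.eq_empty_or_nonempty U with h | h
      · simp [hG₀, h, Real.sSup_empty]
      · have himg : IsCompact ((fun y => (g (x * y) : ℝ)) '' U) :=
          hU.image (NNReal.continuous_coe.comp (hg.comp (continuous_mul_left x)))
        obtain ⟨y₀, hy₀, hval⟩ := himg.sSup_mem (h.image _)
        calc ENNReal.ofReal (G₀ x) = ENNReal.ofReal ((g (x * y₀) : ℝ)) := by
              simp only [hG₀]
              rw [← hval]
          _ = (g (x * y₀) : ℝ≥0∞) := ENNReal.ofReal_coe_nnreal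
          _ ≤ ⨆ y ∈ U, (g (x * y) : ℝ≥0∞) :=
              le_biSup (fun y => (g (x * y) : ℝ≥0∞)) hy₀
  set Ψ₀ : H → ℝ := fun x => G₀ x * m x with hΨ₀
  have hΨ₀c : Continuous Ψ₀ := hG₀c.mul hmcont
  have hΨ₀nn : ∀ x, 0 ≤ Ψ₀ x := fun x => mul_nonneg (hG₀nn x) (hmpos x).le
  -- rewriting the two factors of the right-hand side
  have hAeq : (∫⁻ x, (f x : ℝ≥0∞) * ENNReal.ofReal (m x) ∂μ)
      = ∫⁻ x, ENNReal.ofReal (k₀ x) ∂μ := by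
    refine lintegral_congr fun x => ?_
    simp only [hk₀]
    rw [← ENNReal.ofReal_coe_nnreal (p := f x), ← ENNReal.ofReal_mul (f x).coe_nonneg]
  have hBeq : (∫⁻ x, (⨆ y ∈ U, (g (x * y) : ℝ≥0∞)) * ENNReal.ofReal (m x) ∂μ)
      = ∫⁻ x, ENNReal.ofReal (Ψ₀ x) ∂μ := by
    refine lintegral_congr fun x => ?_
    rw [hGeq x]
    simp only [hΨ₀]
    rw [← ENNReal.ofReal_mul (hG₀nn x)]
  -- main pointwise estimate
  have step : (∫⁻ x, (⨆ y ∈ U, ∫⁻ z, (f z : ℝ≥0∞) * (g (z⁻¹ * (x * y)) : ℝ≥0∞) ∂μ) *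
        ENNReal.ofReal (m x) ∂μ) ≤
      ∫⁻ x, ∫⁻ z, ENNReal.ofReal (k₀ z) * ENNReal.ofReal (Ψ₀ (z⁻¹ * x)) ∂μ ∂μ := by
    refine lintegral_mono fun x => ?_
    calc (⨆ y ∈ U, ∫⁻ z, (f z : ℝ≥0∞) * (g (z⁻¹ * (x * y)) : ℝ≥0∞) ∂μ) *
          ENNReal.ofReal (m x)
        ≤ (∫⁻ z, (f z : ℝ≥0∞) * ENNReal.ofReal (G₀ (z⁻¹ * x)) ∂μ) *
          ENNReal.ofReal (m x) := by
          refine mul_le_mul_left (iSup₂_le fun y hy => lintegral_mono fun z => ?_) _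
          refine mul_le_mul_right ?_ _
          rw [← hGeq (z⁻¹ * x)]
          have hxy : z⁻¹ * (x * y) = (z⁻¹ * x) * y := (mul_assoc _ _ _).symm
          rw [hxy]
          exact le_biSup (fun y => (g ((z⁻¹ * x) * y) : ℝ≥0∞)) hy
      _ = ∫⁻ z, (f z : ℝ≥0∞) * ENNReal.ofReal (G₀ (z⁻¹ * x)) *
            ENNReal.ofReal (m x) ∂μ :=
          (lintegral_mul_const' _ _ ENNReal.ofReal_ne_top).symm
      _ ≤ _ := by
          refine lintegral_mono fun z => ?_
          have hx : ENNReal.ofReal (m x)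
              ≤ ENNReal.ofReal (m z) * ENNReal.ofReal (m (z⁻¹ * x)) := by
            rw [← ENNReal.ofReal_mul (hmpos z).le]
            refine ENNReal.ofReal_le_ofReal ?_
            calc m x = m (z * (z⁻¹ * x)) := by rw [mul_inv_cancel_left]
              _ ≤ m z * m (z⁻¹ * x) := hmsub _ _
          calc (f z : ℝ≥0∞) * ENNReal.ofReal (G₀ (z⁻¹ * x)) * ENNReal.ofReal (m x)
              ≤ (f z : ℝ≥0∞) * ENNReal.ofReal (G₀ (z⁻¹ * x)) *
                (ENNReal.ofReal (m z) * ENNReal.ofReal (m (z⁻¹ * x))) :=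
                mul_le_mul_right hx _
            _ = ((f z : ℝ≥0∞) * ENNReal.ofReal (m z)) *
                (ENNReal.ofReal (G₀ (z⁻¹ * x)) * ENNReal.ofReal (m (z⁻¹ * x))) := by
                ring
            _ = ENNReal.ofReal (k₀ z) * ENNReal.ofReal (Ψ₀ (z⁻¹ * x)) := by
                simp only [hk₀, hΨ₀]
                rw [← ENNReal.ofReal_coe_nnreal (p := f z),
                  ← ENNReal.ofReal_mul (f z).coe_nonneg,
                  ← ENNReal.ofReal_mul (hG₀nn (z⁻¹ * x))]
  rw [hAeq, hBeq]
  -- vanishing lemma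
  have zero_of : ∀ h : H → ℝ, Continuous h → (∀ x, 0 ≤ h x) →
      (∫⁻ x, ENNReal.ofReal (h x) ∂μ) = 0 → ∀ x, h x = 0 := by
    intro h hc hnn hint x
    by_contra hne
    have hopen : IsOpen {x | h x ≠ 0} := isOpen_compl_singleton.preimage hc
    have hmeas : Measurable fun x => ENNReal.ofReal (h x) :=
      (ENNReal.continuous_ofReal.comp hc).measurable
    have hae := (lintegral_eq_zero_iff hmeas).mp hint
    have hnull : μ {x | h x ≠ 0} = 0 := by
      apply measure_mono_null ?_ (ae_iff.mp hae)
      intro y hy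
      simp only [Set.mem_setOf_eq] at hy ⊢
      intro h0
      have hle : h y ≤ 0 := by simpa [ENNReal.ofReal_eq_zero] using h0
      exact hy (le_antisymm hle (hnn y))
    have hempty := (hopen.measure_eq_zero_iff μ).mp hnull
    exact absurd hempty (Set.nonempty_iff_ne_empty.mp ⟨x, hne⟩)
  by_cases hA0 : (∫⁻ x, ENNReal.ofReal (k₀ x) ∂μ) = 0
  · have hzero := zero_of k₀ hk₀c hk₀nn hA0
    refine le_trans step (le_of_eq ?_) |>.trans (zero_le)
    calc (∫⁻ x, ∫⁻ z, ENNReal.ofReal (k₀ z) * ENNReal.ofReal (Ψ₀ (z⁻¹ * x)) ∂μ ∂μ)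
        = ∫⁻ x, ∫⁻ z, 0 ∂μ ∂μ := by
          refine lintegral_congr fun x => lintegral_congr fun z => ?_
          rw [hzero z]
          simp
      _ = 0 := by simp
  · by_cases hB0 : (∫⁻ x, ENNReal.ofReal (Ψ₀ x) ∂μ) = 0
    · have hzero := zero_of Ψ₀ hΨ₀c hΨ₀nn hB0
      refine le_trans step (le_of_eq ?_) |>.trans (zero_le)
      calc (∫⁻ x, ∫⁻ z, ENNReal.ofReal (k₀ z) * ENNReal.ofReal (Ψ₀ (z⁻¹ * x)) ∂μ ∂μ)
          = ∫⁻ x, ∫⁻ z, 0 ∂μ ∂μ := by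
            refine lintegral_congr fun x => lintegral_congr fun z => ?_
            rw [hzero (z⁻¹ * x)]
            simp
        _ = 0 := by simp
    · by_cases hAtop : (∫⁻ x, ENNReal.ofReal (k₀ x) ∂μ) = ⊤
      · rw [hAtop, ENNReal.top_mul hB0]
        exact le_top
      · by_cases hBtop : (∫⁻ x, ENNReal.ofReal (Ψ₀ x) ∂μ) = ⊤
        · rw [hBtop, ENNReal.mul_top hA0]
          exact le_top
        · exact step.trans (aux_keyswap μ k₀ Ψ₀ hk₀c hΨ₀c hk₀nn hΨ₀nn hAtop hBtop)
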